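/- In the current-algebra setup with g = Matrix (Fin l) ℂ under the commutator bracket (l ≥ 1), let V be a ℂ-vector space, γ a ℂ-bilinear map D × D → ℂ with γ(u,u) = 0 which is normalized, ρ : D →ₗ[ℂ] End_ℂ(V) a projective representation with cocycle γ (⁅ρ u, ρ v⁆ = ρ ⁅u,v⁆ + γ(u,v)·id_V), and let T_e ∈ End_ℂ(V) be an operator satisfying the Sugawara commutation relation ⁅T_e, ρ(j x a)⁆ = ρ(j x (δ a)) for all x ∈ g, a ∈ 𝒜. Set Δ_e = ρ(e) − T_e. Then ⁅Δ_e, ρ(j x a)⁆ = (trace(x)/l)·γ(e, j 1ₗ a)·id_V for all x ∈ g and a ∈ 𝒜. -/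

import Mathlib

/-- Lemma 4.4 of the paper: for `g = 𝔤𝔩(l)`, an admissible normalized
projective module `(V, ρ)` with cocycle `γ`, and a Sugawara operator `Tₑ`
with `[Tₑ, ρ(j x a)] = ρ(j x (δ a))`, the operator `Δₑ = ρ e − Tₑ` satisfies
`[Δₑ, ρ(j x a)] = (tr x / l)·γ(e, j 1ₗ a)·id`. -/
theorem semicasimir_commutator_gl
    (l : ℕ) (hl : 1 ≤ l)
    (D : Type*) [LieRing D] [LieAlgebra ℂ D]
    (A : Type*) [CommRing A] [Algebra ℂ A]
    (j : Matrix (Fin l) (Fin l) ℂ →ₗ[ℂ] A →ₗ[ℂ] D)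
    (hj : ∀ (x y : Matrix (Fin l) (Fin l) ℂ) (a b : A),
      ⁅j x a, j y b⁆ = j ⁅x, y⁆ (a * b))
    (e : D) (δ : A →ₗ[ℂ] A) (hδ : δ 1 = 0)
    (he : ∀ (x : Matrix (Fin l) (Fin l) ℂ) (a : A), ⁅e, j x a⁆ = j x (δ a))
    (V : Type*) [AddCommGroup V] [Module ℂ V]
    (γ : D →ₗ[ℂ] D →ₗ[ℂ] ℂ)
    (hγ_alt : ∀ u : D, γ u u = 0)
    (hγ_norm : ∀ (x y : Matrix (Fin l) (Fin l) ℂ) (b : A), γ (j x 1) (j y b) = 0)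
    (ρ : D →ₗ[ℂ] Module.End ℂ V)
    (hρ : ∀ u v : D, ⁅ρ u, ρ v⁆ = ρ ⁅u, v⁆ + γ u v • (1 : Module.End ℂ V))
    (Te : Module.End ℂ V)
    (hTe : ∀ (x : Matrix (Fin l) (Fin l) ℂ) (a : A),
      ⁅Te, ρ (j x a)⁆ = ρ (j x (δ a))) :
    ∀ (x : Matrix (Fin l) (Fin l) ℂ) (a : A),
      ⁅ρ e - Te, ρ (j x a)⁆ =
        ((Matrix.trace x / (l : ℂ)) * γ e (j 1 a)) • (1 : Module.End ℂ V) := by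
  letI : LieRing (Module.End ℂ V) := LieRing.ofAssociativeRing
  -- antisymmetry of γ
  have hγ_skew : ∀ u v : D, γ u v = - γ v u := by
    intro u v
    have h := hγ_alt (u + v)
    simp only [map_add, LinearMap.add_apply, hγ_alt] at h
    linear_combination h
  -- the 2-cocycle identity, up to `• 1`
  have cocycle : ∀ u v w : D,
      γ ⁅u, v⁆ w • (1 : Module.End ℂ V) + γ ⁅v, w⁆ u • (1 : Module.End ℂ V)
        + γ ⁅w, u⁆ v • (1 : Module.End ℂ V) = 0 := by
    intro u v w
    have key : ∀ p q r : D,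
        ⁅⁅ρ p, ρ q⁆, ρ r⁆ = ρ ⁅⁅p, q⁆, r⁆ + γ ⁅p, q⁆ r • (1 : Module.End ℂ V) := by
      intro p q r
      have h1 : ⁅(1 : Module.End ℂ V), ρ r⁆ = 0 := by
        simp [Ring.lie_def]
      rw [hρ p q, add_lie, hρ ⁅p, q⁆ r, smul_lie, h1, smul_zero, add_zero]
    have hEnd : ⁅⁅ρ u, ρ v⁆, ρ w⁆ + ⁅⁅ρ v, ρ w⁆, ρ u⁆ + ⁅⁅ρ w, ρ u⁆, ρ v⁆ = 0 := by
      have := lie_jacobi (ρ w) (ρ u) (ρ v)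
      rw [← lie_skew ⁅ρ u, ρ v⁆ (ρ w), ← lie_skew ⁅ρ v, ρ w⁆ (ρ u),
        ← lie_skew ⁅ρ w, ρ u⁆ (ρ v)] at *
      linear_combination (norm := abel) -this
    have hD : ⁅⁅u, v⁆, w⁆ + ⁅⁅v, w⁆, u⁆ + ⁅⁅w, u⁆, v⁆ = (0 : D) := by
      have := lie_jacobi w u v
      rw [← lie_skew ⁅u, v⁆ w, ← lie_skew ⁅v, w⁆ u, ← lie_skew ⁅w, u⁆ v] at *
      linear_combination (norm := abel) -this
    have : ρ ⁅⁅u, v⁆, w⁆ + ρ ⁅⁅v, w⁆, u⁆ + ρ ⁅⁅w, u⁆, v⁆ = 0 := by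
      rw [← map_add, ← map_add, hD, map_zero]
    rw [key u v w, key v w u, key w u v] at hEnd
    linear_combination (norm := abel) hEnd - this
  intro x a
  -- brackets of matrices evaluate to zero γ-scalars
  have hcomm : ∀ y z : Matrix (Fin l) (Fin l) ℂ,
      γ e (j ⁅y, z⁆ a) • (1 : Module.End ℂ V) = 0 := by
    intro y z
    have h := cocycle e (j y 1) (j z a)
    have h1 : ⁅e, j y 1⁆ = 0 := by rw [he, hδ, map_zero]
    have h2 : ⁅j y 1, j z a⁆ = j ⁅y, z⁆ a := by rw [hj, one_mul]
    have h3 : γ ⁅j z a, e⁆ (j y 1) = 0 := by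
      have hz : ⁅(j z) a, e⁆ = -(j z (δ a)) := by
        rw [← he z a, ← lie_skew]
      rw [hz, map_neg, LinearMap.neg_apply, hγ_skew (j z (δ a)) (j y 1),
        hγ_norm, neg_zero, neg_zero]
    simp only [h1, h2, h3, map_zero, LinearMap.zero_apply, zero_smul,
      add_zero, zero_add] at h
    rw [hγ_skew e (j ⁅y, z⁆ a), neg_smul, neg_eq_zero]
    exact h
  -- the scalar identity as endomorphisms, for each matrix x
  have main : ∀ y : Matrix (Fin l) (Fin l) ℂ,
      γ e (j y a) • (1 : Module.End ℂ V)
        = ((Matrix.trace y / (l : ℂ)) * γ e (j 1 a)) • (1 : Module.End ℂ V) := by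
    -- both sides are linear in y; check on the standard basis
    set L1 : Matrix (Fin l) (Fin l) ℂ →ₗ[ℂ] Module.End ℂ V :=
      ((γ e).comp (j.flip a)).smulRight (1 : Module.End ℂ V) with hL1
    set L2 : Matrix (Fin l) (Fin l) ℂ →ₗ[ℂ] Module.End ℂ V :=
      (Matrix.traceLinearMap (Fin l) ℂ ℂ).smulRight
        ((γ e (j 1 a) / (l : ℂ)) • (1 : Module.End ℂ V)) with hL2
    have hbasis : ∀ p q : Fin l, L1 (Matrix.single p q 1)
        = L2 (Matrix.single p q 1) := by
      intro p q
      simp only [hL1, hL2, LinearMap.smulRight_apply, LinearMap.comp_apply,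
        LinearMap.flip_apply, Matrix.traceLinearMap_apply]
      by_cases hpq : p = q
      · subst hpq
        rw [Matrix.trace_single_eq_same, one_smul]
        -- E_pp = (1/l) • (1 + ∑_q ⁅E_{pq}, E_{qp}⁆)
        have hdec : Matrix.single p p (1 : ℂ)
            = ((l : ℂ))⁻¹ • ((1 : Matrix (Fin l) (Fin l) ℂ)
              + ∑ q : Fin l, ⁅Matrix.single p q (1 : ℂ),
                  Matrix.single q p (1 : ℂ)⁆) := by
          have hterm : ∀ q : Fin l, ⁅Matrix.single p q (1 : ℂ),
              Matrix.single q p (1 : ℂ)⁆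
              = Matrix.single p p 1 - Matrix.single q q 1 := by
            intro q
            rw [Ring.lie_def, Matrix.single_mul_single_same,
              Matrix.single_mul_single_same, mul_one]
          have hone : ∑ q : Fin l, Matrix.single q q (1 : ℂ)
              = (1 : Matrix (Fin l) (Fin l) ℂ) := by
            ext i k
            by_cases h : i = k
            · subst h
              simp [Matrix.single, Matrix.one_apply, Matrix.sum_apply]
            · rw [Matrix.sum_apply, Matrix.one_apply_ne h,
                Finset.sum_eq_zero fun q _ => ?_]
              simp only [Matrix.single, Matrix.of_apply]
              exact if_neg fun hc => h (hc.1.symm.trans hc.2)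
          have hsum : ∑ q : Fin l, ⁅Matrix.single p q (1 : ℂ),
              Matrix.single q p (1 : ℂ)⁆
              = (l : ℂ) • Matrix.single p p 1 - 1 := by
            rw [Finset.sum_congr rfl (fun q _ => hterm q), Finset.sum_sub_distrib,
              Finset.sum_const, Finset.card_univ, Fintype.card_fin, hone,
              Nat.cast_smul_eq_nsmul ℂ]
          have hl' : (l : ℂ) ≠ 0 := by
            exact_mod_cast Nat.cast_ne_zero.mpr (by omega)
          rw [hsum, add_sub_cancel, smul_smul, inv_mul_cancel₀ hl', one_smul]
        have expand : γ e (j (Matrix.single p p (1 : ℂ)) a)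
              • (1 : Module.End ℂ V)
            = ((l : ℂ))⁻¹ • (γ e (j 1 a) • (1 : Module.End ℂ V)
              + ∑ q : Fin l, γ e (j ⁅Matrix.single p q (1 : ℂ),
                  Matrix.single q p (1 : ℂ)⁆ a) • (1 : Module.End ℂ V)) := by
          rw [hdec]
          simp only [map_smul, LinearMap.smul_apply, smul_eq_mul, mul_smul,
            map_add, LinearMap.add_apply, add_smul, map_sum, LinearMap.sum_apply,
            Finset.sum_smul]
        rw [expand, Finset.sum_eq_zero fun q _ => hcomm _ _, add_zero, smul_smul,
          div_eq_inv_mul]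
      · -- off-diagonal case: E_{pq} = ⁅E_{pp}, E_{pq}⁆
        have hE : Matrix.single p q (1 : ℂ)
            = ⁅Matrix.single p p (1 : ℂ), Matrix.single p q (1 : ℂ)⁆ := by
          rw [Ring.lie_def, Matrix.single_mul_single_same,
            Matrix.single_mul_single_of_ne (h := Ne.symm hpq), mul_one, sub_zero]
        rw [Matrix.trace_single_eq_of_ne (h := hpq), zero_smul]
        rw [hE]
        exact hcomm _ _
    have hLeq : L1 = L2 := by
      apply LinearMap.ext
      intro y
      rw [Matrix.matrix_eq_sum_single y]
      simp only [map_sum, map_smul]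
      refine Finset.sum_congr rfl fun p _ => Finset.sum_congr rfl fun q _ => ?_
      have hsm : Matrix.single p q (y p q)
          = y p q • Matrix.single p q (1 : ℂ) := by
        rw [Matrix.smul_single, smul_eq_mul, mul_one]
      rw [hsm, map_smul, map_smul, hbasis p q]
    intro y
    have := congrArg (fun f : Matrix (Fin l) (Fin l) ℂ →ₗ[ℂ] Module.End ℂ V => f y) hLeq
    simp only [hL1, hL2, LinearMap.smulRight_apply, LinearMap.comp_apply,
      LinearMap.flip_apply, Matrix.traceLinearMap_apply] at this
    rw [this, smul_smul]
    ring_nf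
  -- final computation
  have hbr : ⁅ρ e - Te, ρ (j x a)⁆
      = ⁅ρ e, ρ (j x a)⁆ - ⁅Te, ρ (j x a)⁆ := sub_lie _ _ _
  rw [hbr, hρ e (j x a), he, hTe, add_sub_cancel_left]
  exact main x
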